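/- Let L ⊆ Σ* and let D be a DFA accepting exactly L, with initial state s; write q·w for evalFrom(q,w). Suppose there exist states q₁ ≠ q₂ and words ω, x, y, z ∈ Σ* such that: s·ω = q₁; q₁·x = q₂ and q₂·x = q₂; q₂·y = q₁; and exactly one of the states q₁·z, q₂·z is accepting (so L is of type (*″)). Then L is not recognized by any PRA-C with any interval. -/
import Mathlib


/-- A real square matrix is doubly stochastic if all entries are nonnegative and
every row and every column sums to 1. -/
def DoublyStochastic {n : ℕ} (A : Matrix (Fin n) (Fin n) ℝ) : Prop :=
  (∀ i j, 0 ≤ A i j) ∧ (∀ i, ∑ j, A i j = 1) ∧ (∀ j, ∑ i, A i j = 1)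

/-- A 1-way probabilistic reversible C-automaton (PRA-C) over input alphabet `α`:
a finite state set `Fin n`, an initial state, a set of accepting states, and
a doubly stochastic matrix for each symbol of the working alphabet
(the letters of `α` together with the end-markers `#` and `$`). -/
structure PRAC (α : Type) where
  n : ℕ
  q0 : Fin n
  F : Finset (Fin n)
  V : α → Matrix (Fin n) (Fin n) ℝ
  Vhash : Matrix (Fin n) (Fin n) ℝ
  Vdollar : Matrix (Fin n) (Fin n) ℝ
  ds : ∀ a, DoublyStochastic (V a)
  ds_hash : DoublyStochastic Vhash
  ds_dollar : DoublyStochastic Vdollar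

namespace PRAC

variable {α : Type}

/-- Acceptance probability of a word `w = σ₁…σ_k`: the total mass on accepting states of
`V_$ ⬝ V_{σ_k} ⬝ ⋯ ⬝ V_{σ₁} ⬝ V_# ⬝ e_{q₀}`. -/
def accProb (A : PRAC α) (w : List α) : ℝ :=
  ∑ q ∈ A.F,
    (A.Vdollar.mulVec
      (w.foldl (fun v a => (A.V a).mulVec v) (A.Vhash.mulVec (Pi.single A.q0 1)))) q

/-- Recognition of a language with interval `(p₁, p₂)`. -/
def Recognizes (A : PRAC α) (L : Set (List α)) (p1 p2 : ℝ) : Prop :=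
  0 ≤ p1 ∧ p1 < p2 ∧ p2 ≤ 1 ∧
  (∀ w ∈ L, p2 ≤ A.accProb w) ∧ (∀ w ∉ L, A.accProb w ≤ p1)

/-- Recognition with probability `p`, i.e. with interval `(1 - p, p)`. -/
def RecognizesWithProb (A : PRAC α) (L : Set (List α)) (p : ℝ) : Prop :=
  A.Recognizes L (1 - p) p

end PRAC


namespace Aux

open Matrix

variable {N : ℕ}

def Phi (v : Fin N → ℝ) : ℝ := ∑ i, (v i) ^ 2

lemma Phi_nonneg (v : Fin N → ℝ) : 0 ≤ Phi v :=
  Finset.sum_nonneg fun _ _ => sq_nonneg _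

lemma Phi_eq_zero {v : Fin N → ℝ} (h : Phi v = 0) : v = 0 := by
  funext i
  have := (Finset.sum_eq_zero_iff_of_nonneg (fun i _ => sq_nonneg (v i))).1 h i (Finset.mem_univ i)
  exact pow_eq_zero_iff two_ne_zero |>.1 this

lemma continuous_Phi : Continuous (Phi : (Fin N → ℝ) → ℝ) :=
  continuous_finset_sum _ fun i _ => (continuous_apply i).pow 2

lemma ds_one : DoublyStochastic (1 : Matrix (Fin N) (Fin N) ℝ) := by
  refine ⟨fun i j => ?_, fun i => ?_, fun j => ?_⟩
  · rcases eq_or_ne i j with h | h <;> simp [Matrix.one_apply, h]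
  · simp [Matrix.one_apply]
  · simp [Matrix.one_apply]

lemma ds_mul {A B : Matrix (Fin N) (Fin N) ℝ} (hA : DoublyStochastic A)
    (hB : DoublyStochastic B) : DoublyStochastic (A * B) := by
  obtain ⟨hA0, hAr, hAc⟩ := hA
  obtain ⟨hB0, hBr, hBc⟩ := hB
  refine ⟨fun i j => ?_, fun i => ?_, fun j => ?_⟩
  · rw [Matrix.mul_apply]
    exact Finset.sum_nonneg fun k _ => mul_nonneg (hA0 i k) (hB0 k j)
  · simp only [Matrix.mul_apply]
    rw [Finset.sum_comm]
    rw [Finset.sum_congr rfl fun k _ => by rw [← Finset.mul_sum, hBr k, mul_one]]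
    exact hAr i
  · simp only [Matrix.mul_apply]
    rw [Finset.sum_comm]
    rw [Finset.sum_congr rfl fun k _ => by rw [← Finset.sum_mul, hAc k, one_mul]]
    exact hBc j

lemma ds_pow {A : Matrix (Fin N) (Fin N) ℝ} (hA : DoublyStochastic A) :
    ∀ k, DoublyStochastic (A ^ k) := by
  intro k
  induction k with
  | zero => simpa using ds_one
  | succ k ih => rw [pow_succ]; exact ds_mul ih hA

lemma ds_contraction {A : Matrix (Fin N) (Fin N) ℝ} (hA : DoublyStochastic A)
    (v : Fin N → ℝ) : Phi (A *ᵥ v) ≤ Phi v := by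
  obtain ⟨h0, hr, hc⟩ := hA
  have key : ∀ i, (A *ᵥ v) i ^ 2 ≤ ∑ j, A i j * v j ^ 2 := by
    intro i
    have cs := Finset.sum_mul_sq_le_sq_mul_sq Finset.univ
      (fun j => Real.sqrt (A i j)) (fun j => Real.sqrt (A i j) * v j)
    have e1 : ∀ j, Real.sqrt (A i j) * (Real.sqrt (A i j) * v j) = A i j * v j := fun j => by
      rw [← mul_assoc, Real.mul_self_sqrt (h0 i j)]
    have e2 : ∀ j, Real.sqrt (A i j) ^ 2 = A i j := fun j => Real.sq_sqrt (h0 i j)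
    have e3 : ∀ j, (Real.sqrt (A i j) * v j) ^ 2 = A i j * v j ^ 2 := fun j => by
      rw [mul_pow, e2]
    have hmv : (A *ᵥ v) i = ∑ j, A i j * v j := rfl
    calc (A *ᵥ v) i ^ 2
        = (∑ j, Real.sqrt (A i j) * (Real.sqrt (A i j) * v j)) ^ 2 := by
          rw [hmv, Finset.sum_congr rfl fun j _ => e1 j]
      _ ≤ (∑ j, Real.sqrt (A i j) ^ 2) * (∑ j, (Real.sqrt (A i j) * v j) ^ 2) := cs
      _ = (∑ j, A i j) * (∑ j, A i j * v j ^ 2) := by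
          rw [Finset.sum_congr rfl fun j _ => e2 j, Finset.sum_congr rfl fun j _ => e3 j]
      _ = ∑ j, A i j * v j ^ 2 := by rw [hr i, one_mul]
  calc Phi (A *ᵥ v) ≤ ∑ i, ∑ j, A i j * v j ^ 2 := Finset.sum_le_sum fun i _ => key i
    _ = ∑ j, ∑ i, A i j * v j ^ 2 := Finset.sum_comm
    _ = ∑ j, (∑ i, A i j) * v j ^ 2 := by
          exact Finset.sum_congr rfl fun j _ => (Finset.sum_mul ..).symm
    _ = Phi v := by
          refine Finset.sum_congr rfl fun j _ => ?_
          rw [hc j, one_mul]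

lemma idem_fix (E : Matrix (Fin N) (Fin N) ℝ) (hidem : E * E = E)
    (hcontr : ∀ w, Phi (E *ᵥ w) ≤ Phi w) (w : Fin N → ℝ) (h : Phi w ≤ Phi (E *ᵥ w)) :
    E *ᵥ w = w := by
  set e := E *ᵥ w with he
  set r := w - e with hr
  have hEe : E *ᵥ e = e := by rw [he, Matrix.mulVec_mulVec, hidem]
  have hEr : E *ᵥ r = 0 := by rw [hr, Matrix.mulVec_sub, ← he, hEe, sub_self]
  have expand : ∀ a b : Fin N → ℝ, Phi (a + b) = Phi a + 2 * (∑ i, a i * b i) + Phi b := by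
    intro a b
    simp only [Phi, Pi.add_apply]
    have hterm : ∀ i : Fin N, (a i + b i) ^ 2 = a i ^ 2 + 2 * (a i * b i) + b i ^ 2 :=
      fun i => by ring
    rw [Finset.sum_congr rfl fun i _ => hterm i, Finset.sum_add_distrib,
      Finset.sum_add_distrib, Finset.mul_sum]
  set ip := ∑ i, e i * r i with hip
  have hwer : w = e + r := by rw [hr]; abel
  have hPhiw : Phi w = Phi e + 2 * ip + Phi r := by
    conv_lhs => rw [hwer]
    rw [expand]
  have h1 : Phi e ≤ Phi w := by rw [he]; exact hcontr w
  have heq : Phi e = Phi w := le_antisymm h1 h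
  have hsum0 : 2 * ip + Phi r = 0 := by linarith
  have hhalf : Phi e ≤ Phi (e + (1/2 : ℝ) • r) := by
    have hcc := hcontr (e + (1/2 : ℝ) • r)
    have hE2 : E *ᵥ (e + (1/2 : ℝ) • r) = e := by
      rw [Matrix.mulVec_add, Matrix.mulVec_smul, hEe, hEr, smul_zero, add_zero]
    rwa [hE2] at hcc
  have hsmul_ip : ∑ i, e i * ((1/2 : ℝ) • r) i = (1/2) * ip := by
    rw [hip, Finset.mul_sum]
    refine Finset.sum_congr rfl fun i _ => ?_
    simp [Pi.smul_apply]
    ring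
  have hsmul_phi : Phi ((1/2 : ℝ) • r) = (1/2 : ℝ) ^ 2 * Phi r := by
    simp only [Phi, Pi.smul_apply, smul_eq_mul, Finset.mul_sum]
    refine Finset.sum_congr rfl fun i _ => ?_
    ring
  have hexp2 : Phi (e + (1/2 : ℝ) • r) = Phi e + 2 * ((1/2) * ip) + (1/2 : ℝ) ^ 2 * Phi r := by
    rw [expand, hsmul_ip, hsmul_phi]
  have hrnn := Phi_nonneg r
  have hr0 : Phi r = 0 := by
    rw [hexp2] at hhalf
    linarith
  have : r = 0 := Phi_eq_zero hr0
  rw [this, add_zero] at hwer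
  exact hwer.symm

lemma ds_isClosed : IsClosed {M : Matrix (Fin N) (Fin N) ℝ | DoublyStochastic M} := by
  have hentry : ∀ i j, Continuous fun M : Matrix (Fin N) (Fin N) ℝ => M i j :=
    fun i j => continuous_id.matrix_elem i j
  have hset : {M : Matrix (Fin N) (Fin N) ℝ | DoublyStochastic M} =
      (⋂ i, ⋂ j, {M : Matrix (Fin N) (Fin N) ℝ | 0 ≤ M i j}) ∩
      ((⋂ i, {M : Matrix (Fin N) (Fin N) ℝ | ∑ j, M i j = 1}) ∩
       (⋂ j, {M : Matrix (Fin N) (Fin N) ℝ | ∑ i, M i j = 1})) := by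
    ext M
    simp [DoublyStochastic, Set.mem_iInter]
  rw [hset]
  exact (isClosed_iInter fun i => isClosed_iInter fun j =>
      isClosed_le continuous_const (hentry i j)).inter
    ((isClosed_iInter fun i =>
        isClosed_eq (continuous_finset_sum _ fun j _ => hentry i j) continuous_const).inter
     (isClosed_iInter fun j =>
        isClosed_eq (continuous_finset_sum _ fun i _ => hentry i j) continuous_const))

lemma box_compact :
    IsCompact {M : Matrix (Fin N) (Fin N) ℝ | ∀ i j, M i j ∈ Set.Icc (0:ℝ) 1} := by
  have hset : {M : Matrix (Fin N) (Fin N) ℝ | ∀ i j, M i j ∈ Set.Icc (0:ℝ) 1} =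
      Set.univ.pi fun _ : Fin N => Set.univ.pi fun _ : Fin N => Set.Icc (0:ℝ) 1 := by
    ext M
    constructor
    · intro h i _
      intro j _
      exact h i j
    · intro h i j
      exact h i (Set.mem_univ i) j (Set.mem_univ j)
  rw [hset]
  exact isCompact_univ_pi fun _ => isCompact_univ_pi fun _ => isCompact_Icc

lemma ds_in_box {M : Matrix (Fin N) (Fin N) ℝ} (h : DoublyStochastic M) :
    ∀ i j, M i j ∈ Set.Icc (0:ℝ) 1 := by
  intro i j
  refine ⟨h.1 i j, ?_⟩
  calc M i j ≤ ∑ j', M i j' :=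
        Finset.single_le_sum (fun j' _ => h.1 i j') (Finset.mem_univ j)
    _ = 1 := h.2.1 i

lemma closure_mul_self {S : Set (Matrix (Fin N) (Fin N) ℝ)}
    (hS : ∀ a ∈ S, ∀ b ∈ S, a * b ∈ S) :
    ∀ a ∈ closure S, ∀ b ∈ closure S, a * b ∈ closure S := by
  have step1 : ∀ b ∈ S, ∀ a ∈ closure S, a * b ∈ closure S := by
    intro b hb a ha
    have hc : Continuous fun m : Matrix (Fin N) (Fin N) ℝ => m * b :=
      continuous_id.matrix_mul continuous_const
    have hsub : S ⊆ (fun m => m * b) ⁻¹' closure S :=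
      fun a' ha' => subset_closure (hS a' ha' b hb)
    exact closure_minimal hsub (isClosed_closure.preimage hc) ha
  intro a ha b hb
  have hc : Continuous fun m : Matrix (Fin N) (Fin N) ℝ => a * m :=
    continuous_const.matrix_mul continuous_id
  have hsub : S ⊆ (fun m => a * m) ⁻¹' closure S := fun b' hb' => step1 b' hb' a ha
  exact closure_minimal hsub (isClosed_closure.preimage hc) hb

lemma pow_succ_mulVec (B : Matrix (Fin N) (Fin N) ℝ) (k : ℕ) (w : Fin N → ℝ) :
    B ^ (k + 1) *ᵥ w = B ^ k *ᵥ (B *ᵥ w) := by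
  rw [Matrix.mulVec_mulVec, ← pow_succ]

lemma closure_mulVec_mem {S : Set (Matrix (Fin N) (Fin N) ℝ)} {K : Set (Fin N → ℝ)}
    (hK : IsClosed K) (u : Fin N → ℝ) (h : ∀ M ∈ S, M *ᵥ u ∈ K) :
    ∀ B ∈ closure S, B *ᵥ u ∈ K := by
  intro B hB
  have hc : Continuous fun M : Matrix (Fin N) (Fin N) ℝ => M *ᵥ u :=
    continuous_id.matrix_mulVec continuous_const
  exact closure_minimal (fun M hM => h M hM) (hK.preimage hc) hB

end Aux


namespace Aux2

open Matrix Aux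

variable {α : Type}

def wm (A : PRAC α) (w : List α) : Matrix (Fin A.n) (Fin A.n) ℝ :=
  w.foldl (fun M a => A.V a * M) 1

lemma foldl_mul_eq (A : PRAC α) (w : List α) (M : Matrix (Fin A.n) (Fin A.n) ℝ) :
    w.foldl (fun M a => A.V a * M) M = wm A w * M := by
  induction w generalizing M with
  | nil => simp [wm]
  | cons a w ih =>
      show w.foldl _ (A.V a * M) = wm A (a :: w) * M
      have h2 : wm A (a :: w) = w.foldl (fun M a => A.V a * M) (A.V a * 1) := rfl
      rw [ih (A.V a * M), h2, ih (A.V a * 1), mul_one, mul_assoc]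

lemma wm_cons (A : PRAC α) (a : α) (w : List α) : wm A (a :: w) = wm A w * A.V a := by
  have h2 : wm A (a :: w) = w.foldl (fun M a => A.V a * M) (A.V a * 1) := rfl
  rw [h2, foldl_mul_eq, mul_one]

lemma wm_mulVec (A : PRAC α) (w : List α) (v : Fin A.n → ℝ) :
    w.foldl (fun v a => (A.V a).mulVec v) v = wm A w *ᵥ v := by
  induction w generalizing v with
  | nil => simp [wm, Matrix.one_mulVec]
  | cons a w ih =>
      simp only [List.foldl_cons]
      rw [ih, wm_cons, ← Matrix.mulVec_mulVec]

lemma wm_append (A : PRAC α) (w t : List α) : wm A (w ++ t) = wm A t * wm A w := by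
  have h : wm A (w ++ t) = t.foldl (fun M a => A.V a * M) (wm A w) := by
    show (w ++ t).foldl _ 1 = _
    rw [List.foldl_append]
    rfl
  rw [h, foldl_mul_eq]

lemma wm_ds (A : PRAC α) (w : List α) : DoublyStochastic (wm A w) := by
  induction w with
  | nil => exact ds_one
  | cons a w ih => rw [wm_cons]; exact ds_mul ih (A.ds a)

def gz (A : PRAC α) (z : List α) (u : Fin A.n → ℝ) : ℝ :=
  ∑ q ∈ A.F, (A.Vdollar *ᵥ (wm A z *ᵥ u)) q

lemma accProb_eq (A : PRAC α) (w z : List α) :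
    A.accProb (w ++ z) = gz A z (wm A w *ᵥ (A.Vhash *ᵥ Pi.single A.q0 1)) := by
  unfold PRAC.accProb gz
  rw [List.foldl_append, wm_mulVec, wm_mulVec]

lemma gz_continuous (A : PRAC α) (z : List α) : Continuous (gz A z) := by
  apply continuous_finset_sum
  intro q _
  exact (continuous_apply q).comp
    (Continuous.matrix_mulVec continuous_const
      (Continuous.matrix_mulVec continuous_const continuous_id))

end Aux2

open Matrix Aux Aux2 in
/-- If a regular language is of type `(*'')`, it is not recognizable by any PRA-C. -/
theorem typeStar''_not_recognizable_by_prac {α σ : Type} [Fintype σ]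
    (L : Set (List α)) (D : DFA α σ) (hD : ∀ w, w ∈ D.accepts ↔ w ∈ L)
    (q1 q2 : σ) (ω x y z : List α) (hne : q1 ≠ q2)
    (hω : D.evalFrom D.start ω = q1)
    (h1x : D.evalFrom q1 x = q2) (h2x : D.evalFrom q2 x = q2)
    (h2y : D.evalFrom q2 y = q1)
    (hz : Xor' (D.evalFrom q1 z ∈ D.accept) (D.evalFrom q2 z ∈ D.accept)) :
    ¬ ∃ (A : PRAC α) (p1 p2 : ℝ), A.Recognizes L p1 p2 := by
  rintro ⟨A, p1, p2, hp1, hlt, hp2, hL, hnL⟩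
  classical
  set h0 : Fin A.n → ℝ := A.Vhash *ᵥ Pi.single A.q0 1 with hh0
  set K : σ → Set (Fin A.n → ℝ) :=
    fun q => closure {u | ∃ w, D.evalFrom D.start w = q ∧ wm A w *ᵥ h0 = u} with hK
  have hKclosed : ∀ q, IsClosed (K q) := fun q => isClosed_closure
  -- membership/side bounds
  have heval : ∀ (w : List α) (q' : σ), D.evalFrom D.start w = q' →
      D.eval (w ++ z) = D.evalFrom q' z := by
    intro w q' hw
    show D.evalFrom D.start (w ++ z) = _
    rw [DFA.evalFrom_of_append, hw]
  have hhi : ∀ q', D.evalFrom q' z ∈ D.accept → ∀ u ∈ K q', p2 ≤ gz A z u := by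
    intro q' hq' u hu
    have hsub : {u | ∃ w, D.evalFrom D.start w = q' ∧ wm A w *ᵥ h0 = u} ⊆
        {u | p2 ≤ gz A z u} := by
      rintro u' ⟨w, hw, rfl⟩
      have hmem : (w ++ z) ∈ L := by
        rw [← hD, DFA.mem_accepts, heval w q' hw]
        exact hq'
      have hacc := hL _ hmem
      rwa [accProb_eq] at hacc
    exact closure_minimal hsub (isClosed_le continuous_const (gz_continuous A z)) hu
  have hlo : ∀ q', D.evalFrom q' z ∉ D.accept → ∀ u ∈ K q', gz A z u ≤ p1 := by
    intro q' hq' u hu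
    have hsub : {u | ∃ w, D.evalFrom D.start w = q' ∧ wm A w *ᵥ h0 = u} ⊆
        {u | gz A z u ≤ p1} := by
      rintro u' ⟨w, hw, rfl⟩
      have hmem : (w ++ z) ∉ L := by
        rw [← hD, DFA.mem_accepts, heval w q' hw]
        exact hq'
      have hacc := hnL _ hmem
      rwa [accProb_eq] at hacc
    exact closure_minimal hsub (isClosed_le (gz_continuous A z) continuous_const) hu
  -- mapping lemma
  have hmap : ∀ (t : List α) (qa qb : σ), D.evalFrom qa t = qb →
      ∀ u ∈ K qa, wm A t *ᵥ u ∈ K qb := by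
    intro t qa qb ht u hu
    have hc : Continuous fun v : Fin A.n → ℝ => wm A t *ᵥ v :=
      continuous_const.matrix_mulVec continuous_id
    have hsub : {u | ∃ w, D.evalFrom D.start w = qa ∧ wm A w *ᵥ h0 = u} ⊆
        (fun v => wm A t *ᵥ v) ⁻¹' K qb := by
      rintro u' ⟨w, hw, rfl⟩
      refine subset_closure ⟨w ++ t, ?_, ?_⟩
      · rw [DFA.evalFrom_of_append, hw, ht]
      · rw [wm_append, ← Matrix.mulVec_mulVec]
    exact closure_minimal hsub ((hKclosed qb).preimage hc) hu
  set X := wm A x with hXdef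
  set Y := wm A y with hYdef
  have hXpow2 : ∀ k, ∀ u ∈ K q2, X ^ k *ᵥ u ∈ K q2 := by
    intro k
    induction k with
    | zero => intro u hu; simpa [Matrix.one_mulVec] using hu
    | succ k ih =>
        intro u hu
        rw [pow_succ_mulVec]
        exact ih _ (hmap x q2 q2 h2x u hu)
  have hXpow12 : ∀ k, ∀ u ∈ K q1, X ^ (k+1) *ᵥ u ∈ K q2 := by
    intro k u hu
    rw [pow_succ_mulVec]
    exact hXpow2 k _ (hmap x q1 q2 h1x u hu)
  -- idempotent in closure of powers of X
  have hcml : ∀ r : Matrix (Fin A.n) (Fin A.n) ℝ, Continuous (· * r) :=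
    fun r => continuous_id.matrix_mul continuous_const
  have hidem_of : ∀ M : Matrix (Fin A.n) (Fin A.n) ℝ, DoublyStochastic M →
      ∃ E ∈ closure {B | ∃ k : ℕ, B = M ^ (k+1)}, E * E = E ∧ DoublyStochastic E := by
    intro M hM
    set S0 : Set (Matrix (Fin A.n) (Fin A.n) ℝ) := {B | ∃ k : ℕ, B = M ^ (k+1)} with hS0
    have hS0mul : ∀ a ∈ S0, ∀ b ∈ S0, a * b ∈ S0 := by
      rintro a ⟨k, rfl⟩ b ⟨l, rfl⟩
      exact ⟨k + l + 1, by rw [← pow_add]; congr 1; omega⟩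
    have hS0ds : ∀ B ∈ S0, DoublyStochastic B := by
      rintro B ⟨k, rfl⟩
      exact ds_pow hM (k+1)
    have hclds : closure S0 ⊆ {B | DoublyStochastic B} :=
      closure_minimal hS0ds ds_isClosed
    have hclbox : closure S0 ⊆ {B : Matrix (Fin A.n) (Fin A.n) ℝ |
        ∀ i j, B i j ∈ Set.Icc (0:ℝ) 1} :=
      fun B hB => ds_in_box (hclds hB)
    have hcompact : IsCompact (closure S0) :=
      box_compact.of_isClosed_subset isClosed_closure hclbox
    obtain ⟨E, hEmem, hEidem⟩ := exists_idempotent_in_compact_subsemigroup hcml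
      (closure S0) ⟨M, subset_closure ⟨0, (pow_one M).symm⟩⟩ hcompact
      (closure_mul_self hS0mul)
    exact ⟨E, hEmem, hEidem, hclds hEmem⟩
  obtain ⟨E, hEmem, hEidem, hEds⟩ := hidem_of X (wm_ds A x)
  have hEmap12 : ∀ u ∈ K q1, E *ᵥ u ∈ K q2 := by
    intro u hu
    refine closure_mulVec_mem (hKclosed q2) u ?_ E hEmem
    rintro M ⟨k, rfl⟩
    exact hXpow12 k u hu
  have hv : (wm A ω *ᵥ h0) ∈ K q1 := subset_closure ⟨ω, hω, rfl⟩
  set u1 : Fin A.n → ℝ := E *ᵥ (wm A ω *ᵥ h0) with hu1def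
  have hu1 : u1 ∈ K q2 := hEmap12 _ hv
  set C := E * Y with hCdef
  have hCds : DoublyStochastic C := ds_mul hEds (wm_ds A y)
  have hCmap : ∀ u ∈ K q2, C *ᵥ u ∈ K q2 := by
    intro u hu
    rw [hCdef, ← Matrix.mulVec_mulVec]
    exact hEmap12 _ (hmap y q2 q1 h2y u hu)
  have hCpow : ∀ k, ∀ u ∈ K q2, C ^ k *ᵥ u ∈ K q2 := by
    intro k
    induction k with
    | zero => intro u hu; simpa [Matrix.one_mulVec] using hu
    | succ k ih =>
        intro u hu
        rw [pow_succ_mulVec]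
        exact ih _ (hCmap u hu)
  obtain ⟨P, hPmem, hPidem, hPds⟩ := hidem_of C hCds
  set u2 : Fin A.n → ℝ := P *ᵥ u1 with hu2def
  have hu2 : u2 ∈ K q2 := by
    refine closure_mulVec_mem (hKclosed q2) u1 ?_ P hPmem
    rintro M ⟨k, rfl⟩
    exact hCpow (k+1) u1 hu1
  have hPu2 : P *ᵥ u2 = u2 := by
    rw [hu2def, Matrix.mulVec_mulVec, hPidem]
  have hkey : Phi u2 ≤ Phi (C *ᵥ u2) := by
    have hall : ∀ M ∈ {B | ∃ k : ℕ, B = C ^ (k+1)}, M *ᵥ u2 ∈ {v | Phi v ≤ Phi (C *ᵥ u2)} := by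
      rintro M ⟨k, rfl⟩
      show Phi (C ^ (k+1) *ᵥ u2) ≤ Phi (C *ᵥ u2)
      rw [pow_succ_mulVec]
      exact ds_contraction (ds_pow hCds k) _
    have hcl := closure_mulVec_mem (isClosed_le continuous_Phi continuous_const) u2 hall P hPmem
    have : Phi (P *ᵥ u2) ≤ Phi (C *ᵥ u2) := hcl
    rwa [hPu2] at this
  set ξ : Fin A.n → ℝ := Y *ᵥ u2 with hξdef
  have hξ1 : ξ ∈ K q1 := hmap y q2 q1 h2y u2 hu2
  have hEξ : E *ᵥ ξ = ξ := by
    refine idem_fix E hEidem (fun w => ds_contraction hEds w) ξ ?_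
    have h3 : C *ᵥ u2 = E *ᵥ ξ := by rw [hξdef, hCdef, ← Matrix.mulVec_mulVec]
    have h4 : Phi ξ ≤ Phi u2 := ds_contraction (wm_ds A y) u2
    rw [h3] at hkey
    linarith
  have hξ2 : ξ ∈ K q2 := by
    have := hEmap12 ξ hξ1
    rwa [hEξ] at this
  rcases hz with ⟨ha1, ha2⟩ | ⟨ha2, ha1⟩
  · have hb1 := hhi q1 ha1 ξ hξ1
    have hb2 := hlo q2 ha2 ξ hξ2
    linarith
  · have hb1 := hhi q2 ha2 ξ hξ2
    have hb2 := hlo q1 ha1 ξ hξ1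
    linarith
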